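/- arXiv:1606.04752 — 3 statements merged into one kernel-verified Lean document; each statement's English description precedes it below -/
import Mathlib

section
/- Let H be a complex inner product space, q ∈ ℝ, M ≥ 1, vectors ξ₁, …, ξ_M ∈ H, and simple tensors u ∈ H^{⊗p}, v ∈ H^{⊗s}. For each r = (r₁,…,r_M) ∈ {0,1}^M let s_w(r) = #{w' : w ≤ w' ≤ M and r_{w'} = 0} and e(r) = Σ_{w=1}^M r_w·(p − s_w(r)). Then (a_{ξ₁} ∘ a_{ξ₂} ∘ ⋯ ∘ a_{ξ_M})(u⊗v) = Σ_{r∈{0,1}^M} q^{e(r)} · (A_L^r u) ⊗ (A_R^r v), where A_L^r is the composition of the operators a_{ξ_w} over those w with r_w = 0 and A_R^r is the composition of the operators a_{ξ_w} over those w with r_w = 1, in each case composed so that the indices w appear in the same relative order as in a_{ξ₁} ∘ ⋯ ∘ a_{ξ_M} (i.e., the largest index is applied first). -/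
noncomputable section

variable {H : Type*} [NormedAddCommGroup H] [InnerProductSpace ℂ H]

/-- The simple tensor `ζ 0 ⊗ ⋯ ⊗ ζ (n-1)` in the algebraic Fock space
`F(H) = ⨁ₙ H^{⊗n}`, realized as the tensor algebra (for `n = 0` this is the
vacuum vector `Ω = 1`). -/
def st (n : ℕ) (ζ : Fin n → H) : TensorAlgebra ℂ H :=
  (List.ofFn fun i => TensorAlgebra.ι ℂ (ζ i)).prod

/-- Remove the `i`-th entry from a tuple. -/
def removeNth {α : Type*} : {n : ℕ} → Fin n → (Fin n → α) → Fin (n - 1) → α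
  | 0, i, _ => i.elim0
  | _ + 1, i, ζ => fun j => ζ (i.succAbove j)

/-- `a` is the family of `q`-annihilation operators on the algebraic Fock space:
`a_ξ Ω = 0` and `a_ξ (ζ₁⊗⋯⊗ζₙ) = Σᵢ q^(i-1) ⟨ξ, ζᵢ⟩ ζ₁⊗⋯⊗ζ̂ᵢ⊗⋯⊗ζₙ`. -/
def IsAnnihilation (q : ℝ) (a : H → Module.End ℂ (TensorAlgebra ℂ H)) : Prop :=
  ∀ (ξ : H) (n : ℕ) (ζ : Fin n → H),
    a ξ (st n ζ) =
      ∑ i : Fin n, ((q : ℂ) ^ (i : ℕ) * (inner ℂ ξ (ζ i) : ℂ)) • st (n - 1) (removeNth i ζ)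

/-- For a bit string `r : Fin M → Bool` (`false` = routed left, `true` = routed right),
`sCount r w = #{w' : w ≤ w' ∧ r w' = 0}`. -/
def sCount {M : ℕ} (r : Fin M → Bool) (w : Fin M) : ℕ :=
  (Finset.univ.filter fun w' : Fin M => w ≤ w' ∧ r w' = false).card

/-- The exponent `e(r) = Σ_w r_w ⬝ (p − s_w(r))`. -/
def eExp {M : ℕ} (p : ℕ) (r : Fin M → Bool) : ℕ :=
  ∑ w : Fin M, if r w then p - sCount r w else 0


def stL (l : List H) : TensorAlgebra ℂ H := (l.map (TensorAlgebra.ι ℂ)).prod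

lemma st_eq_stL (n : ℕ) (ζ : Fin n → H) : st n ζ = stL (List.ofFn ζ) := by
  simp only [st, stL, List.map_ofFn]; rfl

lemma stL_append (l m : List H) : stL (l ++ m) = stL l * stL m := by
  simp [stL]

lemma ofFn_removeNth {α : Type*} : ∀ {n : ℕ} (i : Fin n) (ζ : Fin n → α),
    List.ofFn (removeNth i ζ) = (List.ofFn ζ).eraseIdx i
  | 0, i, _ => i.elim0
  | n + 1, i, ζ => by
    induction i using Fin.cases with
    | zero =>
      simp [removeNth, Fin.zero_succAbove, List.ofFn_succ]
    | succ j =>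
      match n, j with
      | m + 1, j =>
        have h1 : removeNth j.succ ζ = fun k : Fin (m+1) => ζ (j.succ.succAbove k) := rfl
        rw [h1]
        rw [List.ofFn_succ]
        simp only [Fin.succ_succAbove_zero, Fin.succ_succAbove_succ]
        have h2 : (List.ofFn fun k : Fin m => ζ (j.succAbove k).succ) =
            List.ofFn (removeNth j (fun k : Fin (m+1) => ζ k.succ)) := rfl
        rw [h2, ofFn_removeNth j (fun k => ζ k.succ)]
        rw [List.ofFn_succ (f := ζ)]
        rfl

lemma haL {q : ℝ} {a : H → Module.End ℂ (TensorAlgebra ℂ H)} (ha : IsAnnihilation q a)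
    (ξ : H) (l : List H) {n : ℕ} (hn : l.length = n) :
    a ξ (stL l) = ∑ i : Fin n,
      ((q : ℂ) ^ (i : ℕ) * (inner ℂ ξ (l.getD i 0) : ℂ)) • stL (l.eraseIdx i) := by
  subst hn
  have h := ha ξ l.length l.get
  rw [st_eq_stL, List.ofFn_get] at h
  rw [h]
  refine Finset.sum_congr rfl fun i _ => ?_
  rw [st_eq_stL, ofFn_removeNth, List.ofFn_get]
  congr 2
  rw [List.getD_eq_getElem _ _ i.isLt]
  rfl

lemma mul_split {q : ℝ} {a : H → Module.End ℂ (TensorAlgebra ℂ H)} (ha : IsAnnihilation q a)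
    (ξ : H) (l m : List H) :
    a ξ (stL l * stL m) =
      (a ξ (stL l)) * stL m + ((q : ℂ) ^ l.length) • (stL l * a ξ (stL m)) := by
  rw [← stL_append, haL ha ξ (l ++ m) List.length_append, Fin.sum_univ_add]
  congr 1
  · rw [haL ha ξ l rfl, Finset.sum_mul]
    refine Finset.sum_congr rfl fun i _ => ?_
    rw [smul_mul_assoc, ← stL_append]
    have h1 : ((Fin.castAdd m.length i : Fin (l.length + m.length)) : ℕ) = (i : ℕ) := rfl
    rw [h1, List.eraseIdx_append_of_lt_length i.isLt, List.getD_append _ _ _ _ i.isLt]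
  · rw [haL ha ξ m rfl, Finset.mul_sum, Finset.smul_sum]
    refine Finset.sum_congr rfl fun j _ => ?_
    have h1 : ((Fin.natAdd l.length j : Fin (l.length + m.length)) : ℕ) = l.length + (j : ℕ) := rfl
    rw [h1, List.eraseIdx_append_of_length_le (Nat.le_add_right _ _),
      List.getD_append_right _ _ _ _ (Nat.le_add_right _ _), Nat.add_sub_cancel_left,
      stL_append, mul_smul_comm, smul_smul]
    congr 1
    rw [pow_add]
    ring

def SGen (d : ℕ) : Set (TensorAlgebra ℂ H) := {y | ∃ l : List H, l.length = d ∧ y = stL l}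

def SAll : Set (TensorAlgebra ℂ H) := {y | ∃ l : List H, y = stL l}

lemma ann_mem_span {q : ℝ} {a : H → Module.End ℂ (TensorAlgebra ℂ H)} (ha : IsAnnihilation q a)
    (ξ : H) {x : TensorAlgebra ℂ H} (hx : x ∈ Submodule.span ℂ (SAll (H := H))) :
    a ξ x ∈ Submodule.span ℂ (SAll (H := H)) := by
  induction hx using Submodule.span_induction with
  | mem y hy =>
    obtain ⟨l, rfl⟩ := hy
    rw [haL ha ξ l rfl]
    exact Submodule.sum_mem _ fun i _ =>
      Submodule.smul_mem _ _ (Submodule.subset_span ⟨_, rfl⟩)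
  | zero => simp
  | add x y _ _ hx hy => rw [map_add]; exact Submodule.add_mem _ hx hy
  | smul c x _ hx => rw [map_smul]; exact Submodule.smul_mem _ _ hx

lemma ann_mem_homog {q : ℝ} {a : H → Module.End ℂ (TensorAlgebra ℂ H)} (ha : IsAnnihilation q a)
    (ξ : H) {d : ℕ} {x : TensorAlgebra ℂ H} (hx : x ∈ Submodule.span ℂ (SGen (H := H) d)) :
    a ξ x ∈ Submodule.span ℂ (SGen (H := H) (d - 1)) := by
  induction hx using Submodule.span_induction with
  | mem y hy =>
    obtain ⟨l, hl, rfl⟩ := hy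
    rw [haL ha ξ l hl]
    refine Submodule.sum_mem _ fun i _ => Submodule.smul_mem _ _ (Submodule.subset_span ?_)
    exact ⟨l.eraseIdx i, by rw [List.length_eraseIdx]; simp [hl, i.isLt], rfl⟩
  | zero => simp
  | add x y _ _ hx hy => rw [map_add]; exact Submodule.add_mem _ hx hy
  | smul c x _ hx => rw [map_smul]; exact Submodule.smul_mem _ _ hx

lemma prodList_mem_homog {q : ℝ} {a : H → Module.End ℂ (TensorAlgebra ℂ H)}
    (ha : IsAnnihilation q a) (ts : List H) {d : ℕ} {x : TensorAlgebra ℂ H}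
    (hx : x ∈ Submodule.span ℂ (SGen (H := H) d)) :
    ((ts.map a).prod) x ∈ Submodule.span ℂ (SGen (H := H) (d - ts.length)) := by
  induction ts with
  | nil => simpa using hx
  | cons t ts ih =>
    simp only [List.map_cons, List.prod_cons, Module.End.mul_apply, List.length_cons]
    have h := ann_mem_homog ha t ih
    rwa [Nat.sub_sub] at h
  
lemma prodList_mem_span {q : ℝ} {a : H → Module.End ℂ (TensorAlgebra ℂ H)}
    (ha : IsAnnihilation q a) (ts : List H) {x : TensorAlgebra ℂ H}
    (hx : x ∈ Submodule.span ℂ (SAll (H := H))) :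
    ((ts.map a).prod) x ∈ Submodule.span ℂ (SAll (H := H)) := by
  induction ts with
  | nil => simpa using hx
  | cons t ts ih =>
    simp only [List.map_cons, List.prod_cons, Module.End.mul_apply]
    exact ann_mem_span ha t ih

lemma split {q : ℝ} {a : H → Module.End ℂ (TensorAlgebra ℂ H)} (ha : IsAnnihilation q a)
    (ξ : H) {d : ℕ} {x y : TensorAlgebra ℂ H}
    (hx : x ∈ Submodule.span ℂ (SGen (H := H) d))
    (hy : y ∈ Submodule.span ℂ (SAll (H := H))) :
    a ξ (x * y) = (a ξ x) * y + ((q : ℂ) ^ d) • (x * a ξ y) := by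
  induction hx using Submodule.span_induction with
  | mem x hxm =>
    obtain ⟨l, hl, rfl⟩ := hxm
    subst hl
    induction hy using Submodule.span_induction with
    | mem y hym =>
      obtain ⟨m, rfl⟩ := hym
      exact mul_split ha ξ l m
    | zero => simp
    | add y z _ _ h1 h2 =>
      simp only [mul_add, map_add, h1, h2, smul_add]
      abel
    | smul c y _ h1 =>
      simp only [Algebra.mul_smul_comm, map_smul, h1, smul_add, smul_smul]
      rw [mul_comm c]
  | zero => simp
  | add x y _ _ h1 h2 =>
    simp only [add_mul, map_add, h1, h2, smul_add]
    abel
  | smul c x _ h1 =>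
    simp only [Algebra.smul_mul_assoc, map_smul, h1, smul_add, smul_smul]
    rw [mul_comm c]


lemma sCount_cons_succ {M : ℕ} (b : Bool) (r' : Fin M → Bool) (w : Fin M) :
    sCount (Fin.cons b r') w.succ = sCount r' w := by
  simp only [sCount, Finset.card_filter]
  rw [Fin.sum_univ_succ]
  have h0 : ¬ (w.succ ≤ (0 : Fin (M + 1))) := by
    simp [Fin.le_def]
  simp [h0, Fin.succ_le_succ_iff, Fin.cons_succ]

lemma sCount_cons_zero {M : ℕ} (b : Bool) (r' : Fin M → Bool) :
    sCount (Fin.cons b r') 0 =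
      (if b then 0 else 1) + (Finset.univ.filter fun w => r' w = false).card := by
  simp only [sCount, Finset.card_filter]
  rw [Fin.sum_univ_succ]
  simp [Fin.cons_zero, Fin.cons_succ, Fin.zero_le]
  cases b <;> simp

lemma eExp_cons {M : ℕ} (p : ℕ) (b : Bool) (r' : Fin M → Bool) :
    eExp p (Fin.cons b r') =
      (if b then p - (Finset.univ.filter fun w => r' w = false).card else 0) + eExp p r' := by
  simp only [eExp]
  rw [Fin.sum_univ_succ]
  congr 1
  · cases b <;> simp [Fin.cons_zero, sCount_cons_zero]
  · exact Finset.sum_congr rfl fun w _ => by rw [Fin.cons_succ, sCount_cons_succ]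

lemma length_filter_eq_card {M : ℕ} (r : Fin M → Bool) :
    ((List.finRange M).filter fun w => !(r w)).length =
      (Finset.univ.filter fun w => r w = false).card := by
  simp only [Fin.univ_def, Finset.filter, Finset.card, Multiset.filter_coe, Multiset.coe_card]
  simp

lemma filter_finRange_succ {M : ℕ} (P : Fin (M + 1) → Bool) :
    (List.finRange (M + 1)).filter P =
      (if P 0 then [(0 : Fin (M + 1))] else []) ++
        (((List.finRange M).filter fun w => P w.succ).map Fin.succ) := by
  rw [List.finRange_succ, List.filter_cons, List.filter_map]
  split <;> rfl

lemma key {q : ℝ} {a : H → Module.End ℂ (TensorAlgebra ℂ H)} (ha : IsAnnihilation q a) :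
    ∀ (M : ℕ) (ξ : Fin M → H) (p : ℕ) (x y : TensorAlgebra ℂ H),
      x ∈ Submodule.span ℂ (SGen (H := H) p) → y ∈ Submodule.span ℂ (SAll (H := H)) →
      ((List.ofFn fun w => a (ξ w)).prod) (x * y) =
        ∑ r : Fin M → Bool, ((q : ℂ) ^ eExp p r) •
          ((((List.finRange M).filter fun w => !(r w)).map fun w => a (ξ w)).prod x *
           (((List.finRange M).filter fun w => r w).map fun w => a (ξ w)).prod y) := by
  intro M
  induction M with
  | zero =>
    intro ξ p x y hx hy
    simp [eExp, List.finRange]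
  | succ M ih =>
    intro ξ p x y hx hy
    -- abbreviations
    set ξ' : Fin M → H := fun w => ξ w.succ with hξ'
    have hLHS : (List.ofFn fun w : Fin (M+1) => a (ξ w)).prod =
        a (ξ 0) * (List.ofFn fun w : Fin M => a (ξ' w)).prod := by
      rw [List.ofFn_succ, List.prod_cons]
    rw [hLHS, Module.End.mul_apply, ih ξ' p x y hx hy, map_sum]
    -- notation for the pieces
    set PX : (Fin M → Bool) → TensorAlgebra ℂ H := fun r' =>
      (((List.finRange M).filter fun w => !(r' w)).map fun w => a (ξ' w)).prod x with hPX
    set PY : (Fin M → Bool) → TensorAlgebra ℂ H := fun r' =>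
      (((List.finRange M).filter fun w => r' w).map fun w => a (ξ' w)).prod y with hPY
    set cF : (Fin M → Bool) → ℕ := fun r' =>
      (Finset.univ.filter fun w => r' w = false).card with hcF
    have hsplit : ∀ r' : Fin M → Bool,
        a (ξ 0) (PX r' * PY r') =
          a (ξ 0) (PX r') * PY r' + ((q : ℂ) ^ (p - cF r')) • (PX r' * a (ξ 0) (PY r')) := by
      intro r'
      have hmm : PX r' = ((((List.finRange M).filter fun w => !(r' w)).map ξ').map a).prod x := by
        rw [hPX, List.map_map]; rfl
      have hX : PX r' ∈ Submodule.span ℂ (SGen (H := H) (p - cF r')) := by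
        rw [hmm]
        have := prodList_mem_homog ha (((List.finRange M).filter fun w => !(r' w)).map ξ') hx
        rwa [List.length_map, length_filter_eq_card] at this
      have hmmY : PY r' = ((((List.finRange M).filter fun w => r' w).map ξ').map a).prod y := by
        rw [hPY, List.map_map]; rfl
      have hY : PY r' ∈ Submodule.span ℂ (SAll (H := H)) := by
        rw [hmmY]; exact prodList_mem_span ha _ hy
      exact split ha (ξ 0) hX hY
    -- compute LHS
    have hL : ∑ r' : Fin M → Bool, a (ξ 0) (((q : ℂ) ^ eExp p r') • (PX r' * PY r')) =
        ∑ r' : Fin M → Bool,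
          (((q : ℂ) ^ eExp p r') • (a (ξ 0) (PX r') * PY r') +
           ((q : ℂ) ^ ((p - cF r') + eExp p r')) • (PX r' * a (ξ 0) (PY r'))) := by
      refine Finset.sum_congr rfl fun r' _ => ?_
      rw [map_smul, hsplit r', smul_add, smul_smul, ← pow_add, Nat.add_comm (eExp p r') (p - cF r')]
    rw [hL, Finset.sum_add_distrib]
    -- compute RHS via Bool × (Fin M → Bool)
    rw [← Equiv.sum_comp (Fin.consEquiv fun _ : Fin (M+1) => Bool), Fintype.sum_prod_type,
      Fintype.sum_bool]
    have hfilterL : ∀ (b : Bool) (r' : Fin M → Bool),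
        (((List.finRange (M+1)).filter fun w => !((Fin.cons b r' : Fin (M+1) → Bool) w)).map
            fun w => a (ξ w)) =
          (if !b then [a (ξ 0)] else []) ++
            (((List.finRange M).filter fun w => !(r' w)).map fun w => a (ξ' w)) := by
      intro b r'
      rw [filter_finRange_succ, List.map_append, List.map_map]
      congr 1
      cases b <;> rfl
    have hfilterR : ∀ (b : Bool) (r' : Fin M → Bool),
        (((List.finRange (M+1)).filter fun w => ((Fin.cons b r' : Fin (M+1) → Bool) w)).map
            fun w => a (ξ w)) =
          (if b then [a (ξ 0)] else []) ++
            (((List.finRange M).filter fun w => r' w).map fun w => a (ξ' w)) := by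
      intro b r'
      rw [filter_finRange_succ, List.map_append, List.map_map]
      congr 1
      cases b <;> rfl
    have htrue : ∀ r' : Fin M → Bool,
        ((q : ℂ) ^ eExp p ((Fin.consEquiv fun _ : Fin (M+1) => Bool) (true, r'))) •
          ((((List.finRange (M+1)).filter fun w =>
              !((Fin.consEquiv fun _ : Fin (M+1) => Bool) (true, r') w)).map
                fun w => a (ξ w)).prod x *
           (((List.finRange (M+1)).filter fun w =>
              ((Fin.consEquiv fun _ : Fin (M+1) => Bool) (true, r') w)).map
                fun w => a (ξ w)).prod y) =
        ((q : ℂ) ^ ((p - cF r') + eExp p r')) • (PX r' * a (ξ 0) (PY r')) := by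
      intro r'
      have e : (Fin.consEquiv fun _ : Fin (M+1) => Bool) (true, r') =
          (Fin.cons true r' : Fin (M+1) → Bool) := rfl
      rw [e, hfilterL, hfilterR, eExp_cons]
      simp only [Bool.not_true, if_true, Bool.false_eq_true, if_false, List.nil_append,
        List.singleton_append, List.prod_cons, Module.End.mul_apply]
      rfl
    have hfalse : ∀ r' : Fin M → Bool,
        ((q : ℂ) ^ eExp p ((Fin.consEquiv fun _ : Fin (M+1) => Bool) (false, r'))) •
          ((((List.finRange (M+1)).filter fun w =>
              !((Fin.consEquiv fun _ : Fin (M+1) => Bool) (false, r') w)).map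
                fun w => a (ξ w)).prod x *
           (((List.finRange (M+1)).filter fun w =>
              ((Fin.consEquiv fun _ : Fin (M+1) => Bool) (false, r') w)).map
                fun w => a (ξ w)).prod y) =
        ((q : ℂ) ^ eExp p r') • (a (ξ 0) (PX r') * PY r') := by
      intro r'
      have e : (Fin.consEquiv fun _ : Fin (M+1) => Bool) (false, r') =
          (Fin.cons false r' : Fin (M+1) → Bool) := rfl
      rw [e, hfilterL, hfilterR, eExp_cons]
      simp only [Bool.not_false, if_true, Bool.false_eq_true, if_false, List.nil_append,
        List.singleton_append, List.prod_cons, Module.End.mul_apply, zero_add]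
      rfl
    rw [Finset.sum_congr rfl fun r' _ => htrue r', Finset.sum_congr rfl fun r' _ => hfalse r']
    exact (add_comm _ _)


theorem stmt3 (q : ℝ) (a : H → Module.End ℂ (TensorAlgebra ℂ H))
    (ha : IsAnnihilation q a) (M : ℕ) (hM : 1 ≤ M) (ξ : Fin M → H)
    (p s : ℕ) (u : Fin p → H) (v : Fin s → H) :
    ((List.ofFn fun w => a (ξ w)).prod) (st p u * st s v) =
      ∑ r : Fin M → Bool,
        ((q : ℂ) ^ eExp p r) •
          ((((List.finRange M).filter fun w => !(r w)).map fun w => a (ξ w)).prod (st p u) *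
           (((List.finRange M).filter fun w => r w).map fun w => a (ξ w)).prod (st s v)) := by
  refine key ha M ξ p (st p u) (st s v) ?_ ?_
  · exact Submodule.subset_span ⟨List.ofFn u, by simp, st_eq_stL _ _⟩
  · exact Submodule.subset_span ⟨List.ofFn v, st_eq_stL _ _⟩
end
end

section
/- Let H be a complex inner product space and q ∈ ℝ. For every ξ ∈ H, every n ≥ 0, every f ∈ H^{⊗n} and every g ∈ H^{⊗(n+1)}, one has ⟨c_ξ f, g⟩_q = ⟨f, a_ξ g⟩_q; that is, the q-creation operator c_ξ and the q-annihilation operator a_ξ are adjoint to each other with respect to the q-sesquilinear form. -/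
noncomputable section

open scoped TensorProduct
open PiTensorProduct

/-- The number of inversions of a permutation `π` of `Fin n`. -/
def inversions {n : ℕ} (π : Equiv.Perm (Fin n)) : ℕ :=
  (Finset.univ.filter fun p : Fin n × Fin n => p.1 < p.2 ∧ π p.2 < π p.1).card

namespace QAdjAux

open Equiv Finset

variable {n : ℕ}

/-- The permutation of `Fin (n+1)` sending `0 ↦ i` and `j.succ ↦ i.succAbove (σ j)`. -/
def toPerm (i : Fin (n + 1)) (σ : Equiv.Perm (Fin n)) : Equiv.Perm (Fin (n + 1)) :=
  (finSuccEquiv n).trans ((Equiv.optionCongr σ).trans (finSuccEquiv' i).symm)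

@[simp] lemma toPerm_zero (i : Fin (n + 1)) (σ : Equiv.Perm (Fin n)) :
    toPerm i σ 0 = i := by
  simp [toPerm, finSuccEquiv_zero, finSuccEquiv'_symm_none]

@[simp] lemma toPerm_succ (i : Fin (n + 1)) (σ : Equiv.Perm (Fin n)) (j : Fin n) :
    toPerm i σ j.succ = i.succAbove (σ j) := by
  simp [toPerm, finSuccEquiv_succ, finSuccEquiv'_symm_some]

lemma toPerm_bijective :
    Function.Bijective (fun p : Fin (n + 1) × Equiv.Perm (Fin n) => toPerm p.1 p.2) := by
  constructor
  · rintro ⟨i, σ⟩ ⟨i', σ'⟩ h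
    simp only at h
    have h0 : i = i' := by
      have := congrArg (fun π : Equiv.Perm (Fin (n + 1)) => π 0) h
      simpa using this
    subst h0
    have hσ : σ = σ' := by
      ext j
      have := congrArg (fun π : Equiv.Perm (Fin (n + 1)) => π j.succ) h
      simp only [toPerm_succ] at this
      exact congrArg Fin.val (Fin.succAbove_right_injective this)
    rw [hσ]
  · intro π
    set e' : Option (Fin n) ≃ Option (Fin n) :=
      (finSuccEquiv n).symm.trans (π.trans (finSuccEquiv' (π 0))) with he'
    refine ⟨⟨π 0, Equiv.removeNone e'⟩, ?_⟩
    ext j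
    refine Fin.cases ?_ ?_ j
    · simp
    · intro k
      simp only [toPerm_succ]
      have hval : e' (some k) = finSuccEquiv' (π 0) (π k.succ) := by
        simp [he', finSuccEquiv_succ]
      have hne : π k.succ ≠ π 0 := fun h => (Fin.succ_ne_zero k) (π.injective h)
      obtain ⟨m, hm⟩ : ∃ m, finSuccEquiv' (π 0) (π k.succ) = some m := by
        rcases h : finSuccEquiv' (π 0) (π k.succ) with _ | m
        · exact absurd ((finSuccEquiv' (π 0)).injective
            (h.trans (finSuccEquiv'_at (π 0)).symm)) hne
        · exact ⟨m, rfl⟩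
      have h1 : some (Equiv.removeNone e' k) = e' (some k) :=
        Equiv.removeNone_some e' ⟨m, hval.trans hm⟩
      have h2 : Equiv.removeNone e' k = m := by
        rw [hval, hm] at h1
        exact Option.some_injective _ h1
      rw [h2, ← finSuccEquiv'_symm_some, ← hm, Equiv.symm_apply_apply]

lemma sum_ite_castSucc_lt (i : Fin (n + 1)) (σ : Equiv.Perm (Fin n)) :
    (∑ k : Fin n, if (σ k).castSucc < i then 1 else 0) = (i : ℕ) := by
  rw [Equiv.sum_comp σ (fun k : Fin n => if k.castSucc < i then 1 else 0)]
  rw [← Finset.card_filter]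
  induction i using Fin.lastCases with
  | last =>
    simp [Fin.castSucc_lt_last]
  | cast i' =>
    have : (univ.filter fun k : Fin n => k.castSucc < i'.castSucc) = Finset.Iio i' := by
      ext k
      simp [Fin.castSucc_lt_castSucc_iff]
    rw [this, Fin.card_Iio, Fin.coe_castSucc]

lemma inversions_toPerm (i : Fin (n + 1)) (σ : Equiv.Perm (Fin n)) :
    inversions (toPerm i σ) = (i : ℕ) + inversions σ := by
  unfold inversions
  rw [Finset.card_filter, Finset.card_filter, Fintype.sum_prod_type,
    Fin.sum_univ_succ]
  congr 1
  · rw [Fin.sum_univ_succ]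
    simp only [toPerm_zero, toPerm_succ, lt_self_iff_false, false_and, if_false, zero_add,
      Fin.succ_pos, true_and]
    have : ∀ k : Fin n, i.succAbove (σ k) < i ↔ (σ k).castSucc < i := fun k =>
      Fin.succAbove_lt_iff_castSucc_lt i (σ k)
    simp_rw [this]
    exact sum_ite_castSucc_lt i σ
  · rw [Fintype.sum_prod_type]
    refine Finset.sum_congr rfl fun j _ => ?_
    rw [Fin.sum_univ_succ]
    simp only [toPerm_zero, toPerm_succ, Fin.not_lt_zero, false_and, if_false, zero_add,
      Fin.succ_lt_succ_iff, Fin.succAbove_lt_succAbove_iff]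

lemma key {H : Type*} [NormedAddCommGroup H] [InnerProductSpace ℂ H] (q : ℝ)
    (ξ : H) (x : Fin n → H) (y : Fin (n + 1) → H) :
    (∑ π : Equiv.Perm (Fin (n + 1)),
        (q : ℂ) ^ inversions π * ∏ j : Fin (n + 1), (inner ℂ (Fin.cons (α := fun _ => H) ξ x j) (y (π j)) : ℂ)) =
      ∑ i : Fin (n + 1), ((q : ℂ) ^ (i : ℕ) * (inner ℂ ξ (y i) : ℂ)) *
        ∑ σ : Equiv.Perm (Fin n),
          (q : ℂ) ^ inversions σ * ∏ j : Fin n, (inner ℂ (x j) (y (i.succAbove (σ j))) : ℂ) := by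
  have hbij := Fintype.sum_bijective
    (fun p : Fin (n + 1) × Equiv.Perm (Fin n) => QAdjAux.toPerm p.1 p.2) toPerm_bijective
    (fun p : Fin (n + 1) × Equiv.Perm (Fin n) =>
      (q : ℂ) ^ inversions (QAdjAux.toPerm p.1 p.2) *
        ∏ j : Fin (n + 1), (inner ℂ (Fin.cons (α := fun _ => H) ξ x j) (y (QAdjAux.toPerm p.1 p.2 j)) : ℂ))
    (fun π : Equiv.Perm (Fin (n + 1)) =>
      (q : ℂ) ^ inversions π * ∏ j : Fin (n + 1), (inner ℂ (Fin.cons (α := fun _ => H) ξ x j) (y (π j)) : ℂ))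
    (fun _ => rfl)
  rw [← hbij]
  rw [Fintype.sum_prod_type]
  refine Finset.sum_congr rfl fun i _ => ?_
  rw [Finset.mul_sum]
  refine Finset.sum_congr rfl fun σ _ => ?_
  rw [inversions_toPerm, pow_add, Fin.prod_univ_succ]
  simp only [toPerm_zero, toPerm_succ, Fin.cons_zero, Fin.cons_succ]
  ring

end QAdjAux

theorem stmt5 {H : Type*} [NormedAddCommGroup H] [InnerProductSpace ℂ H]
    (q : ℝ)
    -- the q-sesquilinear forms on the algebraic tensor powers `H^{⊗n}`
    (B : ∀ n : ℕ, (⨂[ℂ]^n) H →ₗ⋆[ℂ] (⨂[ℂ]^n) H →ₗ[ℂ] ℂ)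
    (hB : ∀ (n : ℕ) (ξ ζ : Fin n → H),
      B n (tprod ℂ ξ) (tprod ℂ ζ) =
        ∑ π : Equiv.Perm (Fin n),
          (q : ℂ) ^ inversions π * ∏ i : Fin n, (inner ℂ (ξ i) (ζ (π i)) : ℂ))
    -- the q-creation operators
    (c : H → ∀ n : ℕ, (⨂[ℂ]^n) H →ₗ[ℂ] (⨂[ℂ]^(n + 1)) H)
    (hc : ∀ (ξ : H) (n : ℕ) (ζ : Fin n → H), c ξ n (tprod ℂ ζ) = PiTensorProduct.tprod ℂ (Fin.cons ξ ζ))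
    -- the q-annihilation operators
    (a : H → ∀ n : ℕ, (⨂[ℂ]^(n + 1)) H →ₗ[ℂ] (⨂[ℂ]^n) H)
    (ha : ∀ (ξ : H) (n : ℕ) (ζ : Fin (n + 1) → H),
      a ξ n (tprod ℂ ζ) =
        ∑ i : Fin (n + 1),
          ((q : ℂ) ^ (i : ℕ) * (inner ℂ ξ (ζ i) : ℂ)) • tprod ℂ (ζ ∘ i.succAbove))
    (ξ : H) (n : ℕ) (f : (⨂[ℂ]^n) H) (g : (⨂[ℂ]^(n + 1)) H) :
    B (n + 1) (c ξ n f) g = B n f (a ξ n g) := by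
  induction f using PiTensorProduct.induction_on with
  | smul_tprod r x =>
    induction g using PiTensorProduct.induction_on with
    | smul_tprod s y =>
      simp only [map_smul, map_smulₛₗ, LinearMap.smul_apply, smul_eq_mul, hc]
      congr 2
      rw [ha, map_sum, hB]
      simp only [map_smul, smul_eq_mul, hB]
      rw [QAdjAux.key q ξ x y]
      exact Finset.sum_congr rfl fun i _ => by simp [Function.comp]
    | add u v hu hv =>
      simp only [map_add, hu, hv]
  | add u v hu hv =>
    simp only [map_add, LinearMap.add_apply, hu, hv]
end
end

section
/- In the bounded modular setting, let q ∈ ℝ and suppose ξ₀ ∈ H_ℝ satisfies Aξ₀ = ξ₀, and let ξ₁, …, ξₙ ∈ H_ℝ. Then ⟨ξ₀^{⊗n}, A^{-1/2}ξ₁ ⊗ ⋯ ⊗ A^{-1/2}ξₙ⟩_q = ⟨ξ₀^{⊗n}, ξ₁ ⊗ ⋯ ⊗ ξₙ⟩_q, where ⟨·,·⟩_q denotes the q-sesquilinear form built from the inner product ⟨·,·⟩_U. Moreover, if q ∈ (−1,1) and the ξᵢ are nonzero, this quantity vanishes if and only if ⟨ξ₀, ξᵢ⟩_U = 0 for at least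 one i (equivalently, ⟨ξ₀, ξᵢ⟩ = 0 for at least one i). -/
noncomputable section

section Combinatorics

open Finset Equiv

variable {n : ℕ}

/-- Insert the largest value at position `k`. -/
def stmt14Phi (σ : Equiv.Perm (Fin n)) (k : Fin (n+1)) : Equiv.Perm (Fin (n+1)) :=
  (finSuccEquiv' k).trans ((Equiv.optionCongr σ).trans (finSuccEquiv' (Fin.last n)).symm)

lemma stmt14Phi_apply_self (σ : Equiv.Perm (Fin n)) (k : Fin (n+1)) :
    stmt14Phi σ k k = Fin.last n := by
  simp [stmt14Phi, finSuccEquiv'_at, finSuccEquiv'_symm_none]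

lemma stmt14Phi_apply_succAbove (σ : Equiv.Perm (Fin n)) (k : Fin (n+1)) (j : Fin n) :
    stmt14Phi σ k (k.succAbove j) = (σ j).castSucc := by
  simp [stmt14Phi, finSuccEquiv'_succAbove, finSuccEquiv'_symm_some, Fin.succAbove_last]

lemma stmt14Phi_bijective :
    Function.Bijective (fun p : Equiv.Perm (Fin n) × Fin (n+1) => stmt14Phi p.1 p.2) := by
  rw [Fintype.bijective_iff_injective_and_card]
  constructor
  · rintro ⟨σ, k⟩ ⟨σ', k'⟩ h
    simp only at h
    have hk : k = k' := by
      have h1 : stmt14Phi σ' k' k = Fin.last n := by rw [← h, stmt14Phi_apply_self]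
      exact (stmt14Phi σ' k').injective (h1.trans (stmt14Phi_apply_self σ' k').symm)
    subst hk
    have hσ : σ = σ' := by
      apply Equiv.ext
      intro j
      have h2 : stmt14Phi σ k (k.succAbove j) = stmt14Phi σ' k (k.succAbove j) := by rw [h]
      rw [stmt14Phi_apply_succAbove, stmt14Phi_apply_succAbove] at h2
      exact Fin.castSucc_injective _ h2
    rw [hσ]
  · simp [Fintype.card_perm, Nat.factorial_succ, mul_comm]

def stmt14PairEmb (k : Fin (n+1)) : Fin n × Fin n ↪ Fin (n+1) × Fin (n+1) :=
  ⟨fun p => (k.succAbove p.1, k.succAbove p.2), by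
    rintro ⟨a, b⟩ ⟨c, d⟩ h
    simp only [Prod.mk.injEq] at h
    exact Prod.ext (k.succAbove_right_injective h.1) (k.succAbove_right_injective h.2)⟩

def stmt14ColEmb (k : Fin (n+1)) : Fin (n+1) ↪ Fin (n+1) × Fin (n+1) :=
  ⟨fun j => (k, j), by intro a b h; simpa using h⟩

@[simp] lemma stmt14PairEmb_apply (k : Fin (n+1)) (p : Fin n × Fin n) :
    stmt14PairEmb k p = (k.succAbove p.1, k.succAbove p.2) := rfl

@[simp] lemma stmt14ColEmb_apply (k : Fin (n+1)) (j : Fin (n+1)) :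
    stmt14ColEmb k j = (k, j) := rfl

lemma inversions_stmt14Phi (σ : Equiv.Perm (Fin n)) (k : Fin (n+1)) :
    inversions (stmt14Phi σ k) = inversions σ + (n - k) := by
  classical
  have hset : (Finset.univ.filter fun p : Fin (n+1) × Fin (n+1) =>
        p.1 < p.2 ∧ stmt14Phi σ k p.2 < stmt14Phi σ k p.1) =
      ((Finset.univ.filter fun p : Fin n × Fin n =>
          p.1 < p.2 ∧ σ p.2 < σ p.1).map (stmt14PairEmb k))
        ∪ ((Finset.Ioi k).map (stmt14ColEmb k)) := by
    ext ⟨a, b⟩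
    simp only [mem_filter, mem_univ, true_and, mem_union, mem_map, Prod.mk.injEq,
      stmt14PairEmb_apply, stmt14ColEmb_apply, mem_Ioi, Prod.exists]
    constructor
    · rintro ⟨hab, hinv⟩
      by_cases ha : a = k
      · subst ha
        right
        exact ⟨b, hab, rfl, rfl⟩
      · by_cases hb : b = k
        · exfalso
          subst hb
          rw [stmt14Phi_apply_self] at hinv
          exact absurd hinv (not_lt.mpr (Fin.le_last _))
        · obtain ⟨a', ha'⟩ := Fin.exists_succAbove_eq ha
          obtain ⟨b', hb'⟩ := Fin.exists_succAbove_eq hb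
          left
          refine ⟨a', b', ⟨?_, ?_⟩, ha', hb'⟩
          · rw [← ha', ← hb'] at hab
            exact (Fin.succAbove_lt_succAbove_iff).mp hab
          · rw [← ha', ← hb', stmt14Phi_apply_succAbove, stmt14Phi_apply_succAbove] at hinv
            exact (Fin.castSucc_lt_castSucc_iff).mp hinv
    · rintro (⟨a', b', ⟨h1, h2⟩, ha', hb'⟩ | ⟨j, hj, hk, hb⟩)
      · subst ha'; subst hb'
        refine ⟨Fin.succAbove_lt_succAbove_iff.mpr h1, ?_⟩
        rw [stmt14Phi_apply_succAbove, stmt14Phi_apply_succAbove]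
        exact Fin.castSucc_lt_castSucc_iff.mpr h2
      · subst hk; subst hb
        refine ⟨hj, ?_⟩
        rw [stmt14Phi_apply_self]
        have hbk : j ≠ k := (ne_of_gt hj)
        obtain ⟨b', hb'⟩ := Fin.exists_succAbove_eq hbk
        rw [← hb', stmt14Phi_apply_succAbove]
        exact Fin.castSucc_lt_last _
  have hdisj : Disjoint
      ((Finset.univ.filter fun p : Fin n × Fin n =>
          p.1 < p.2 ∧ σ p.2 < σ p.1).map (stmt14PairEmb k))
      ((Finset.Ioi k).map (stmt14ColEmb k)) := by
    rw [Finset.disjoint_left]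
    rintro ⟨a, b⟩ h1 h2
    simp only [mem_map, stmt14PairEmb_apply, stmt14ColEmb_apply, Prod.mk.injEq,
      Prod.exists] at h1 h2
    obtain ⟨a', b', _, ha', _⟩ := h1
    obtain ⟨j, _, hk, _⟩ := h2
    exact Fin.succAbove_ne k a' (ha'.trans hk.symm)
  rw [inversions, hset, Finset.card_union_of_disjoint hdisj, Finset.card_map,
    Finset.card_map, Fin.card_Ioi, inversions]
  simp

lemma stmt14_sum_q_pow_inversions_pos {q : ℝ} (h1 : -1 < q) (h2 : q < 1) (n : ℕ) :
    0 < ∑ π : Equiv.Perm (Fin n), q ^ inversions π := by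
  induction n with
  | zero =>
    rw [Fintype.sum_eq_single (1 : Equiv.Perm (Fin 0))
      (fun x hx => absurd (Subsingleton.elim x 1) hx)]
    simp [inversions]
  | succ n ih =>
    have key : ∑ π : Equiv.Perm (Fin (n+1)), q ^ inversions π
        = ∑ p : Equiv.Perm (Fin n) × Fin (n+1), q ^ (inversions p.1 + (n - (p.2 : ℕ))) := by
      rw [← Fintype.sum_bijective _ stmt14Phi_bijective
        (fun p => q ^ (inversions p.1 + (n - (p.2 : ℕ)))) (fun π => q ^ inversions π)]
      intro p
      rw [inversions_stmt14Phi]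
    rw [key]
    have heq : ∑ p : Equiv.Perm (Fin n) × Fin (n+1), q ^ (inversions p.1 + (n - (p.2 : ℕ)))
        = (∑ σ : Equiv.Perm (Fin n), q ^ inversions σ)
            * (∑ k : Fin (n+1), q ^ (n - (k : ℕ))) := by
      rw [Finset.sum_mul_sum, Fintype.sum_prod_type]
      simp [pow_add]
    rw [heq]
    apply mul_pos ih
    have hgeom : ∑ k : Fin (n+1), q ^ (n - (k : ℕ)) = ∑ i ∈ Finset.range (n+1), q ^ i := by
      rw [Fin.sum_univ_eq_sum_range (fun i => q ^ (n - i))]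
      rw [← Finset.sum_range_reflect (fun i => q ^ i) (n+1)]
      simp
    rw [hgeom]
    exact geom_sum_pos' (by linarith) (Nat.succ_ne_zero n)

end Combinatorics

/-- Bounded modular setting: `J` is a conjugation, `A` a bounded positive invertible
operator with inverse `Ainv` satisfying `J A J = A⁻¹`, `B` is the positive square root
of `A⁻¹` and `T = (1 + A⁻¹)⁻¹`; the new inner product is `⟨ξ, η⟩_U = 2⟨T ξ, η⟩`.
If `ξ₀ ∈ H_ℝ` satisfies `A ξ₀ = ξ₀` and `ξ₁, …, ξₙ ∈ H_ℝ`, then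
`⟨ξ₀^{⊗n}, A^{-1/2}ξ₁ ⊗ ⋯ ⊗ A^{-1/2}ξₙ⟩_q = ⟨ξ₀^{⊗n}, ξ₁ ⊗ ⋯ ⊗ ξₙ⟩_q` (both written out
via the defining sum over permutations); moreover, if `q ∈ (−1,1)` and the `ξᵢ` are
nonzero, this quantity vanishes iff `⟨ξ₀, ξᵢ⟩_U = 0` for some `i`, equivalently iff
`⟨ξ₀, ξᵢ⟩ = 0` for some `i`. -/
theorem stmt14 {H : Type*} [NormedAddCommGroup H] [InnerProductSpace ℂ H] [CompleteSpace H]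
    (J : H →ₗ⋆[ℂ] H) (hJ2 : ∀ x, J (J x) = x) (hJiso : ∀ x, ‖J x‖ = ‖x‖)
    (A Ainv B T : H →L[ℂ] H)
    (hA : A.IsPositive) (hAinv₁ : A ∘L Ainv = 1) (hAinv₂ : Ainv ∘L A = 1)
    (hB : B.IsPositive) (hBB : B ∘L B = Ainv)
    (hJA : ∀ x, J (A x) = Ainv (J x))
    (hT₁ : T ∘L (1 + Ainv) = 1) (hT₂ : (1 + Ainv) ∘L T = 1)
    (q : ℝ) (ξ₀ : H) (hξ₀J : J ξ₀ = ξ₀) (hξ₀A : A ξ₀ = ξ₀)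
    (n : ℕ) (ξ : Fin n → H) (hξJ : ∀ i, J (ξ i) = ξ i) :
    (∑ π : Equiv.Perm (Fin n),
        (q : ℂ) ^ inversions π *
          ∏ i : Fin n, (2 * (inner ℂ (T ξ₀) (B (ξ (π i))) : ℂ))) =
      (∑ π : Equiv.Perm (Fin n),
        (q : ℂ) ^ inversions π *
          ∏ i : Fin n, (2 * (inner ℂ (T ξ₀) (ξ (π i)) : ℂ))) ∧
    (-1 < q → q < 1 → (∀ i, ξ i ≠ 0) →
      (((∑ π : Equiv.Perm (Fin n),
          (q : ℂ) ^ inversions π *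
            ∏ i : Fin n, (2 * (inner ℂ (T ξ₀) (ξ (π i)) : ℂ))) = 0 ↔
        ∃ i : Fin n, 2 * (inner ℂ (T ξ₀) (ξ i) : ℂ) = 0) ∧
       ((∑ π : Equiv.Perm (Fin n),
          (q : ℂ) ^ inversions π *
            ∏ i : Fin n, (2 * (inner ℂ (T ξ₀) (ξ (π i)) : ℂ))) = 0 ↔
        ∃ i : Fin n, (inner ℂ ξ₀ (ξ i) : ℂ) = 0))) := by
  classical
  -- Basic consequences of the hypotheses
  have hAinvξ₀ : Ainv ξ₀ = ξ₀ := by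
    calc Ainv ξ₀ = Ainv (A ξ₀) := by rw [hξ₀A]
    _ = (Ainv ∘L A) ξ₀ := rfl
    _ = ξ₀ := by rw [hAinv₂]; rfl
  have hBBξ₀ : B (B ξ₀) = ξ₀ := by
    have h : (B ∘L B) ξ₀ = Ainv ξ₀ := by rw [hBB]
    simpa [hAinvξ₀] using h
  have hBξ₀ : B ξ₀ = ξ₀ := by
    set y := B ξ₀ - ξ₀ with hy
    have hBy : B y = -y := by
      simp only [hy, map_sub, hBBξ₀]
      abel
    have h0 : 0 ≤ B.reApplyInnerSelf y := hB.2 y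
    rw [ContinuousLinearMap.reApplyInnerSelf, hBy, inner_neg_left, map_neg,
      inner_self_eq_norm_sq] at h0
    have hy0 : y = 0 := by
      have h1 : ‖y‖ ^ 2 ≤ 0 := by linarith
      have h2 := pow_eq_zero_iff (n := 2) (by norm_num) |>.mp
        (le_antisymm h1 (by positivity))
      simpa using h2
    rw [← sub_eq_zero]
    exact hy0
  have hTξ₀ : T ξ₀ = ((2:ℂ)⁻¹) • ξ₀ := by
    have h1 : T (ξ₀ + Ainv ξ₀) = ξ₀ := by
      have h : (T ∘L (1 + Ainv)) ξ₀ = (1 : H →L[ℂ] H) ξ₀ := by rw [hT₁]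
      simpa using h
    have h2 : T ((2:ℂ) • ξ₀) = ξ₀ := by
      rw [two_smul]; rw [hAinvξ₀] at h1; exact h1
    have h3 : (2:ℂ) • T ξ₀ = ξ₀ := by rw [← map_smul]; exact h2
    have h4 : T ξ₀ = (2:ℂ)⁻¹ • ((2:ℂ) • T ξ₀) := by
      rw [smul_smul]; norm_num
    rw [h4, h3]
  have key : ∀ x : H, 2 * (inner ℂ (T ξ₀) x : ℂ) = inner ℂ ξ₀ x := by
    intro x
    rw [hTξ₀, inner_smul_left]
    have h : (starRingEnd ℂ) (2:ℂ)⁻¹ = (2:ℂ)⁻¹ := by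
      rw [map_inv₀, Complex.conj_ofNat]
    rw [h]
    ring
  have keyB : ∀ x : H, (inner ℂ ξ₀ (B x) : ℂ) = (inner ℂ ξ₀ x : ℂ) := by
    intro x
    calc (inner ℂ ξ₀ (B x) : ℂ) = inner ℂ ξ₀ ((ContinuousLinearMap.adjoint B) x) := by
          rw [hB.isSelfAdjoint.adjoint_eq]
    _ = inner ℂ (B ξ₀) x := ContinuousLinearMap.adjoint_inner_right B ξ₀ x
    _ = inner ℂ ξ₀ x := by rw [hBξ₀]
  have hfac : ∀ x : H, 2 * (inner ℂ (T ξ₀) (B x) : ℂ) = 2 * (inner ℂ (T ξ₀) x : ℂ) := by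
    intro x
    rw [key (B x), keyB x, ← key x]
  constructor
  · refine Finset.sum_congr rfl fun π _ => ?_
    congr 1
    exact Finset.prod_congr rfl fun i _ => hfac _
  · intro hq1 hq2 _
    have hterm : ∀ π : Equiv.Perm (Fin n),
        (∏ i : Fin n, (2 * (inner ℂ (T ξ₀) (ξ (π i)) : ℂ)))
          = ∏ i : Fin n, (inner ℂ ξ₀ (ξ i) : ℂ) := by
      intro π
      rw [Finset.prod_congr rfl (fun i _ => key (ξ (π i)))]
      exact Equiv.prod_comp π (fun i => (inner ℂ ξ₀ (ξ i) : ℂ))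
    have hsum : (∑ π : Equiv.Perm (Fin n), (q:ℂ) ^ inversions π *
        ∏ i : Fin n, (2 * (inner ℂ (T ξ₀) (ξ (π i)) : ℂ)))
        = (∑ π : Equiv.Perm (Fin n), (q:ℂ) ^ inversions π)
            * ∏ i : Fin n, (inner ℂ ξ₀ (ξ i) : ℂ) := by
      rw [Finset.sum_mul]
      exact Finset.sum_congr rfl fun π _ => by rw [hterm π]
    have hC : (∑ π : Equiv.Perm (Fin n), (q:ℂ) ^ inversions π)
        = ((∑ π : Equiv.Perm (Fin n), q ^ inversions π : ℝ) : ℂ) := by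
      push_cast
      rfl
    have hCne : (∑ π : Equiv.Perm (Fin n), (q:ℂ) ^ inversions π) ≠ 0 := by
      rw [hC]
      exact_mod_cast ne_of_gt (stmt14_sum_q_pow_inversions_pos hq1 hq2 n)
    have hiff : (∑ π : Equiv.Perm (Fin n), (q:ℂ) ^ inversions π *
        ∏ i : Fin n, (2 * (inner ℂ (T ξ₀) (ξ (π i)) : ℂ))) = 0
        ↔ ∃ i : Fin n, (inner ℂ ξ₀ (ξ i) : ℂ) = 0 := by
      rw [hsum, mul_eq_zero]
      simp [hCne, Finset.prod_eq_zero_iff]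
    constructor
    · rw [hiff]
      constructor
      · rintro ⟨i, hi⟩
        exact ⟨i, by rw [key]; exact hi⟩
      · rintro ⟨i, hi⟩
        rw [key] at hi
        exact ⟨i, hi⟩
    · exact hiff
end
end
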